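/- Let σ : A → A^+ be a substitution with |σ^n(a)| → ∞ as n → ∞ for every a ∈ A. Then the set {w(s̄) : s̄ ∈ Λ} is finite. -/

import Mathlib

open Filter Topology

namespace PaperStmt

variable {A : Type*} {B : Type*}

/-- Apply a substitution (letter-to-word map) to a word, by concatenation. -/
def substWord (σ : B → List A) (w : List B) : List A := w.flatMap σ

/-- `σ^n` applied to a word. -/
def substIter (σ : A → List A) (n : ℕ) (w : List A) : List A := (substWord σ)^[n] w

/-- `σ^n(a)` for a letter `a`. -/
def substPow (σ : A → List A) (n : ℕ) (a : A) : List A := substIter σ n [a]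

/-- The language of a substitution: factors of some `σ^n(a)`, `n ≥ 1`. -/
def Lang (σ : A → List A) : Set (List A) :=
  {w | ∃ a : A, ∃ n : ℕ, 1 ≤ n ∧ w <:+: substIter σ n [a]}

/-- The word `x[i], x[i+1], …, x[i+len-1]` read in a bi-infinite sequence. -/
def seg (x : ℤ → A) (i : ℤ) (len : ℕ) : List A :=
  (List.range len).map fun k => x (i + k)

/-- The phase space `X_σ` of the substitutional dynamical system. -/
def Xsub (σ : A → List A) : Set (ℤ → A) :=
  {x | ∀ n : ℕ, seg x (-(n : ℤ)) (2 * n + 1) ∈ Lang σ}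

/-- `L(X_σ)`: all finite words occurring in elements of `X_σ`. -/
def LangX (σ : A → List A) : Set (List A) :=
  {w | ∃ x ∈ Xsub σ, ∃ i : ℤ, seg x i w.length = w}

/-- The left shift `T`. -/
def shift (x : ℤ → A) : ℤ → A := fun k => x (k + 1)

/-- The power `T^i` of the left shift, `i ∈ ℤ`. -/
def shiftZ (i : ℤ) (x : ℤ → A) : ℤ → A := fun k => x (k + i)

/-- `(X_σ, T_σ)` has no periodic points. -/
def Aperiodic (σ : A → List A) : Prop :=
  ∀ x ∈ Xsub σ, ∀ p : ℕ, 0 < p → shiftZ (p : ℤ) x ≠ x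

/-- The coordinate at which the `n`-th block of the bi-infinite concatenation
`⋯ σ(x_{-1}).σ(x_0) σ(x_1) ⋯` starts (block `0` starts at coordinate `0`). -/
def blockStart (σ : B → List A) (x : ℤ → B) (n : ℤ) : ℤ :=
  if 0 ≤ n then ∑ j ∈ Finset.range n.toNat, ((σ (x (j : ℤ))).length : ℤ)
  else -∑ j ∈ Finset.range (-n).toNat, ((σ (x (-(j : ℤ) - 1))).length : ℤ)

/-- `y` is the image of the bi-infinite sequence `x` under the substitution `σ`,
i.e. `y = ⋯ σ(x_{-1}).σ(x_0)σ(x_1)⋯` with `σ(x_0)` starting at coordinate `0`. -/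
def IsSubstImage (σ : B → List A) (x : ℤ → B) (y : ℤ → A) : Prop :=
  ∀ n : ℤ, seg y (blockStart σ x n) (σ (x n)).length = σ (x n)

/-- `A_l`: the letters `a` with `|σ^n(a)| → ∞`. -/
def longLetters (σ : A → List A) : Set A :=
  {a | Tendsto (fun n => (substPow σ n a).length) atTop atTop}

/-- A minimal component of `(X_σ, T_σ)`: a nonempty closed shift-invariant subset of `X_σ`
that is minimal with respect to inclusion. -/
def MinimalComponent [TopologicalSpace A] (σ : A → List A) (Z : Set (ℤ → A)) : Prop :=
  Z.Nonempty ∧ IsClosed Z ∧ Z ⊆ Xsub σ ∧ shift '' Z = Z ∧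
    ∀ Z' : Set (ℤ → A), Z'.Nonempty → IsClosed Z' → Z' ⊆ Z → shift '' Z' = Z' → Z' = Z

/-- The element `T_σ^i σ^n([a])` of the Kakutani–Rokhlin partition `P_n`. -/
def piece (σ : A → List A) (n : ℕ) (a : A) (i : ℕ) : Set (ℤ → A) :=
  {x | ∃ y z : ℤ → A, y ∈ Xsub σ ∧ y 0 = a ∧
    IsSubstImage (substPow σ n) y z ∧ x = shiftZ (i : ℤ) z}

/-- An `m`-primitive substitution, with respect to a decomposition
`A = P 0 ⊔ … ⊔ P (m-1) ⊔ A0`. -/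
def IsMPrimitive (σ : A → List A) (m : ℕ) (P : Fin m → Set A) (A0 : Set A) : Prop :=
  (∀ i j : Fin m, i ≠ j → Disjoint (P i) (P j)) ∧
  (∀ i, Disjoint (P i) A0) ∧
  ((⋃ i, P i) ∪ A0 = Set.univ) ∧
  (∀ i, ∃ a ∈ P i, ∃ b ∈ P i, a ≠ b) ∧
  (∀ i, ∀ a ∈ P i, ∀ b ∈ σ a, b ∈ P i) ∧
  (∀ i, ∀ a ∈ P i, ∀ b ∈ P i, ∃ n : ℕ, 1 ≤ n ∧ b ∈ substPow σ n a) ∧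
  (∀ a : A, ∃ n : ℕ, 0 < n ∧ ∃ i, ∃ b ∈ P i, b ∈ substPow σ n a) ∧
  (∀ k : ℕ, 1 ≤ k → Lang (substPow σ k) = Lang σ) ∧
  (∀ a : A, [a] ∈ LangX σ)

/-- The set `Z_i` attached to the part `A_i = P i` of an `m`-primitive substitution. -/
def Zset (σ : A → List A) {m : ℕ} (P : Fin m → Set A) (i : Fin m) : Set (ℤ → A) :=
  {x | x ∈ Xsub σ ∧ ∀ n : ℕ, ∃ k : ℕ, 1 ≤ k ∧ ∃ a ∈ P i,
    seg x (-(n : ℤ)) (2 * n + 1) <:+: substPow σ k a}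

/-- The clopen set `W = ∪_i [r_i.l_i]` built from fixed points `w i`. -/
def Wset (σ : A → List A) {m : ℕ} (w : Fin m → ℤ → A) : Set (ℤ → A) :=
  ⋃ i : Fin m, {x | x ∈ Xsub σ ∧ x (-1) = w i (-1) ∧ x 0 = w i 0}

/-- A return word, given the letters `r i = w_i[-1]` and `l i = w_i[0]`. -/
def IsReturnWord (σ : A → List A) {m : ℕ} (r l : Fin m → A) (u : List A) : Prop :=
  u ∈ LangX σ ∧ u ≠ [] ∧ ∃ i j : Fin m,
    (r i :: (u ++ [l j])) ∈ LangX σ ∧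
    u.head? = some (l i) ∧ u.getLast? = some (r j) ∧
    ∀ t : Fin m, ¬ ([r t, l t] <:+: u)

/-- A proper substitution. -/
def IsProper (σ : A → List A) : Prop :=
  ∃ p : ℕ, 0 < p ∧ ∀ a : A,
    (∀ b c : A, [a, b] ∈ LangX σ → [a, c] ∈ LangX σ →
      (substPow σ p b).head? = (substPow σ p c).head?) ∧
    (∀ b c : A, [b, a] ∈ LangX σ → [c, a] ∈ LangX σ →
      (substPow σ p b).getLast? = (substPow σ p c).getLast?)

/-- Membership in the set `V` of words `v₁S₁v₂S₂v₃` with `v₁,v₂,v₃ ∈ A_l`, `S₁,S₂ ∈ A_s^*`. -/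
def Vcond (σ : A → List A) : A × List A × A × List A × A → Prop
  | (v1, S1, v2, S2, v3) =>
    v1 ∈ longLetters σ ∧ v2 ∈ longLetters σ ∧ v3 ∈ longLetters σ ∧
    (∀ c ∈ S1, c ∉ longLetters σ) ∧ (∀ c ∈ S2, c ∉ longLetters σ) ∧
    (v1 :: (S1 ++ v2 :: (S2 ++ [v3]))) ∈ LangX σ

/-- The cylinder set `[v₁S₁.v₂S₂v₃]`. -/
def Vbase (σ : A → List A) : A × List A × A × List A × A → Set (ℤ → A)
  | (v1, S1, v2, S2, v3) =>
    {x | x ∈ Xsub σ ∧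
      seg x (-(1 + S1.length : ℤ)) (v1 :: (S1 ++ v2 :: (S2 ++ [v3]))).length
        = v1 :: (S1 ++ v2 :: (S2 ++ [v3]))}

/-- The height `|σ^n(v₂S₂)|` of the tower over `[v₁S₁.v₂S₂v₃]` in `Ξ_n`. -/
def Vheight (σ : A → List A) (n : ℕ) : A × List A × A × List A × A → ℕ
  | (_, _, v2, S2, _) => (substWord (substPow σ n) (v2 :: S2)).length

/-- The element `T_σ^i σ^n([v₁S₁.v₂S₂v₃])` of the Kakutani–Rokhlin partition `Ξ_n`. -/
def Vpiece (σ : A → List A) (n : ℕ) (q : A × List A × A × List A × A) (i : ℕ) :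
    Set (ℤ → A) :=
  {x | ∃ y z : ℤ → A, y ∈ Vbase σ q ∧ IsSubstImage (substPow σ n) y z ∧
    x = shiftZ (i : ℤ) z}

/-- Membership in `Λ`. -/
def MemLambda (σ : A → List A) (s : ℕ → A × A) : Prop :=
  ∀ n : ℕ, [(s n).1, (s n).2] ∈ Lang σ ∧
    (σ (s (n + 1)).1).getLast? = some (s n).1 ∧
    (σ (s (n + 1)).2).head? = some (s n).2

/-- `x = w(s̄)` for `s̄ ∈ Λ`. -/
def IsLambdaPoint (σ : A → List A) (s : ℕ → A × A) (x : ℤ → A) : Prop :=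
  ∀ n : ℕ, seg x (-((substPow σ n (s n).1).length : ℤ))
      ((substPow σ n (s n).1).length + (substPow σ n (s n).2).length)
    = substPow σ n (s n).1 ++ substPow σ n (s n).2

/-- Membership in `M`: `i₀ = 0` and `a_j` occurs at position `i_{j+1}` of `σ(a_{j+1})`. -/
def MemM (σ : A → List A) (t : ℕ → A × ℕ) : Prop :=
  (t 0).2 = 0 ∧ ∀ j : ℕ, (σ (t (j + 1)).1)[(t (j + 1)).2]? = some (t j).1

/-- The cutting points `j_n` attached to an element of `M`. -/
def jSeq (σ : A → List A) (t : ℕ → A × ℕ) : ℕ → ℕ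
  | 0 => 0
  | n + 1 =>
      jSeq σ t n + (substWord (substPow σ n) ((σ (t (n + 1)).1).take (t (n + 1)).2)).length

/-- Membership in `M₀`: `j_n → ∞` and `|σ^n(a_n)| - j_n → ∞`. -/
def MZero (σ : A → List A) (t : ℕ → A × ℕ) : Prop :=
  MemM σ t ∧ ∀ N : ℕ, ∃ n0 : ℕ, ∀ n ≥ n0,
    N ≤ jSeq σ t n ∧ jSeq σ t n + N ≤ (substPow σ n (t n).1).length

/-- `x = w(m̄)` for `m̄ ∈ M₀`. -/
def IsMPoint (σ : A → List A) (t : ℕ → A × ℕ) (x : ℤ → A) : Prop :=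
  ∀ n : ℕ, seg x (-(jSeq σ t n : ℤ)) (substPow σ n (t n).1).length = substPow σ n (t n).1

lemma list_flatMap_single {α β : Type*} (l : List α) (f : α → β) :
    (l.flatMap fun a => [f a]) = l.map f := by
  induction l with
  | nil => rfl
  | cons a l ih => simp [List.flatMap_cons, ih]

lemma seg_eq (x : ℤ → A) (i : ℤ) (len : ℕ) :
    seg x i len = (List.range len).map (fun k : ℕ => x (i + (k : ℤ))) := by
  rw [seg]
  simp only [List.map_flatMap, Int.ofNat_eq_coe, List.pure_def, List.bind_eq_flatMap]
  exact list_flatMap_single _ _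

lemma seg_length (x : ℤ → A) (i : ℤ) (len : ℕ) : (seg x i len).length = len := by
  rw [seg_eq, List.length_map, List.length_range]

lemma seg_get {x : ℤ → A} {i : ℤ} {len : ℕ} {w : List A} (h : seg x i len = w)
    {j : ℕ} (hj : j < len) : x (i + j) = w[j]'(by rw [← h, seg_length]; exact hj) := by
  subst h
  simp only [seg_eq, List.getElem_map, List.getElem_range]

lemma lambda_agree {A : Type*} {σ : A → List A} {s s' : ℕ → A × A} {x x' : ℤ → A}
    (hx : IsLambdaPoint σ s x) (hx' : IsLambdaPoint σ s' x') {n : ℕ} (h : s n = s' n)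
    {k : ℤ} (h1 : -((substPow σ n (s n).1).length : ℤ) ≤ k)
    (h2 : k < ((substPow σ n (s n).2).length : ℤ)) : x k = x' k := by
  set l1 := (substPow σ n (s n).1).length with hl1
  set l2 := (substPow σ n (s n).2).length with hl2
  set j := (k + (l1 : ℤ)).toNat with hjdef
  have hjk : -(l1 : ℤ) + (j : ℤ) = k := by omega
  have hjlt : j < l1 + l2 := by omega
  have e1 := seg_get (hx n) (w := substPow σ n (s n).1 ++ substPow σ n (s n).2)
    (j := j) hjlt
  have hx'' := hx' n
  rw [← h] at hx''
  have e2 := seg_get hx'' (w := substPow σ n (s n).1 ++ substPow σ n (s n).2)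
    (j := j) hjlt
  rw [hjk] at e1 e2
  rw [e1, e2]

/-- If `|σ^n(a)| → ∞` for every letter `a`, then the set
`{w(s̄) : s̄ ∈ Λ}` is finite. -/
theorem lambda_points_finite
    {A : Type*} [Fintype A] (σ : A → List A) (hne : ∀ a, σ a ≠ [])
    (hunc : ¬ (Xsub σ).Countable)
    (hlen : ∀ a : A, Filter.Tendsto (fun n => (substPow σ n a).length)
      Filter.atTop Filter.atTop) :
    {x : ℤ → A | ∃ s : ℕ → A × A, MemLambda σ s ∧ IsLambdaPoint σ s x}.Finite := by
  classical
  by_contra hinf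
  have hinf' : {x : ℤ → A | ∃ s : ℕ → A × A, MemLambda σ s ∧ IsLambdaPoint σ s x}.Infinite :=
    hinf
  obtain ⟨t, hts, htcard⟩ := hinf'.exists_subset_card_eq (Fintype.card (A × A) + 1)
  have hdiff : ∀ x y : ℤ → A, x ≠ y → ∃ k : ℤ, x k ≠ y k := by
    intro x y hxy
    by_contra h
    push_neg at h
    exact hxy (funext h)
  set g : (ℤ → A) → (ℤ → A) → ℕ := fun x y =>
    if h : x = y then 0 else (Classical.choose (hdiff x y h)).natAbs with hg
  set L : ℕ := t.sup fun x => t.sup (g x) with hLdef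
  have hL : ∀ x ∈ t, ∀ y ∈ t, g x y ≤ L := fun x hx y hy =>
    le_trans (Finset.le_sup hy) (Finset.le_sup (f := fun x => t.sup (g x)) hx)
  have hev : ∀ᶠ n in Filter.atTop, ∀ a : A, L + 1 ≤ (substPow σ n a).length := by
    rw [Filter.eventually_all]
    intro a
    exact (hlen a).eventually_ge_atTop (L + 1)
  obtain ⟨N, hN⟩ := hev.exists
  have hsel : ∀ x ∈ t, ∃ s : ℕ → A × A, IsLambdaPoint σ s x := by
    intro x hx
    obtain ⟨s, _, hs⟩ := hts hx
    exact ⟨s, hs⟩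
  have htpos : 0 < t.card := by omega
  obtain ⟨x0, hx0t⟩ := Finset.card_pos.mp htpos
  have : Nonempty (A × A) := ⟨(x0 0, x0 0)⟩
  choose! s hs using hsel
  have hinj : Set.InjOn (fun x => s x N) t := by
    intro x hx y hy hxy
    by_contra hne
    have hk := Classical.choose_spec (hdiff x y hne)
    set k := Classical.choose (hdiff x y hne) with hkdef
    have hgxy : g x y = k.natAbs := by
      rw [hg]; simp only [dif_neg hne]; rfl
    have hkL : k.natAbs ≤ L := hgxy ▸ hL x hx y hy
    have hb1 : L + 1 ≤ (substPow σ N (s x N).1).length := hN (s x N).1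
    have hb2 : L + 1 ≤ (substPow σ N (s x N).2).length := hN (s x N).2
    exact hk (lambda_agree (hs x hx) (hs y hy) (n := N) hxy (k := k)
      (by omega) (by omega))
  have hcard : t.card ≤ (Finset.univ : Finset (A × A)).card :=
    Finset.card_le_card_of_injOn (fun x => s x N) (fun a _ => Finset.mem_univ _) hinj
  rw [htcard, Finset.card_univ] at hcard
  omega

end PaperStmt
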